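/- For a bounded sequence of rewards (r_i) in [0,1] such that the Cesàro limit lim_{t→∞} (1/t)·Σ_{i=0}^{t-1} r_i exists and equals L, the discounted sums also converge: lim_{γ→1⁻} (1-γ)·Σ_{i=0}^{∞} γ^i·r_i = L. -/

import Mathlib

open Filter Finset Set

set_option maxHeartbeats 1000000

/-- `∑ (i+1) γ^i = 1/(1-γ)^2` for `0 < γ < 1`. -/
private lemma geom2 {γ : ℝ} (h0 : 0 < γ) (h1 : γ < 1) :
    HasSum (fun i : ℕ => ((i : ℝ) + 1) * γ ^ i) (1 / (1 - γ) ^ 2) := by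
  have hn : ‖γ‖ < 1 := by rw [Real.norm_eq_abs, abs_of_pos h0]; exact h1
  have A := hasSum_coe_mul_geometric_of_norm_lt_one (𝕜 := ℝ) hn
  have B := hasSum_geometric_of_norm_lt_one hn
  have hne : (1 : ℝ) - γ ≠ 0 := by linarith
  have C := A.add B
  have hfun : (fun b : ℕ => (b : ℝ) * γ ^ b + γ ^ b)
      = (fun b : ℕ => ((b : ℝ) + 1) * γ ^ b) := by
    funext b; ring
  have hval : γ / (1 - γ) ^ 2 + (1 - γ)⁻¹ = 1 / (1 - γ) ^ 2 := by
    field_simp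
    ring
  rw [hfun, hval] at C
  exact C

/-- Key estimate: if `a i / (i+1) → 0` and `|a i| ≤ C (i+1)`, then
`(1-γ)² ∑ γ^i a i → 0` as `γ → 1⁻`. -/
private lemma key (a : ℕ → ℝ) (C : ℝ) (hb : ∀ i : ℕ, |a i| ≤ C * ((i : ℝ) + 1))
    (ha : Tendsto (fun i : ℕ => a i / ((i : ℝ) + 1)) atTop (nhds 0)) :
    Tendsto (fun γ : ℝ => (1 - γ) ^ 2 * ∑' i : ℕ, γ ^ i * a i)
      (nhdsWithin 1 (Set.Iio 1)) (nhds 0) := by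
  rw [Metric.tendsto_nhdsWithin_nhds]
  intro ε hε
  have hε4 : (0 : ℝ) < ε / 4 := by linarith
  obtain ⟨N, hN⟩ := (Metric.tendsto_atTop.mp ha (ε / 4) hε4)
  have hNbound : ∀ i, N ≤ i → |a i| ≤ (ε / 4) * ((i : ℝ) + 1) := by
    intro i hi
    have h := hN i hi
    rw [Real.dist_eq, sub_zero, abs_div] at h
    have hip : (0 : ℝ) < (i : ℝ) + 1 := by positivity
    rw [abs_of_pos hip] at h
    have := (div_lt_iff₀ hip).mp h
    linarith
  set M : ℝ := ∑ i ∈ Finset.range N, |a i| with hM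
  have hM0 : 0 ≤ M := Finset.sum_nonneg fun i _ => abs_nonneg _
  have hδ0 : (0 : ℝ) < Real.sqrt (ε / (2 * (M + 1))) := by
    apply Real.sqrt_pos.mpr; positivity
  refine ⟨min 1 (Real.sqrt (ε / (2 * (M + 1)))), lt_min one_pos hδ0, ?_⟩
  intro γ hγ1 hγd
  rw [Real.dist_eq] at hγd
  have hγlt : γ < 1 := hγ1
  have hd1 : |γ - 1| < 1 := lt_of_lt_of_le hγd (min_le_left _ _)
  have hd2 : |γ - 1| < Real.sqrt (ε / (2 * (M + 1))) :=
    lt_of_lt_of_le hγd (min_le_right _ _)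
  have hγ0 : 0 < γ := by
    rw [abs_sub_comm, abs_of_pos (by linarith : (0:ℝ) < 1 - γ)] at hd1
    linarith
  have h1γ : 0 < 1 - γ := by linarith
  have hsq : (1 - γ) ^ 2 < ε / (2 * (M + 1)) := by
    rw [abs_sub_comm, abs_of_pos h1γ] at hd2
    have := Real.sq_sqrt (le_of_lt (by positivity : (0:ℝ) < ε / (2 * (M + 1))))
    nlinarith [Real.sqrt_nonneg (ε / (2 * (M + 1)))]
  have hgeo : Summable (fun i : ℕ => ((i : ℝ) + 1) * γ ^ i) := (geom2 hγ0 hγlt).summable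
  have hγpow : ∀ i : ℕ, (0 : ℝ) ≤ γ ^ i := fun i => pow_nonneg hγ0.le i
  have hγpow1 : ∀ i : ℕ, γ ^ i ≤ 1 := fun i => pow_le_one₀ hγ0.le hγlt.le
  have hsummand : ∀ i : ℕ, |γ ^ i * a i| ≤ C * (((i : ℝ) + 1) * γ ^ i) := by
    intro i
    rw [abs_mul, abs_of_nonneg (hγpow i)]
    calc γ ^ i * |a i| ≤ γ ^ i * (C * ((i : ℝ) + 1)) :=
          mul_le_mul_of_nonneg_left (hb i) (hγpow i)
      _ = C * (((i : ℝ) + 1) * γ ^ i) := by ring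
  have hsumabs : Summable (fun i : ℕ => |γ ^ i * a i|) := by
    apply Summable.of_norm_bounded (hgeo.mul_left C)
    intro i
    rw [Real.norm_eq_abs, abs_abs]
    exact hsummand i
  have hbnd : ∀ i : ℕ, |γ ^ i * a i|
      ≤ (if i < N then |a i| else 0) + (ε / 4) * (((i : ℝ) + 1) * γ ^ i) := by
    intro i
    rw [abs_mul, abs_of_nonneg (hγpow i)]
    by_cases hiN : i < N
    · have h1 : γ ^ i * |a i| ≤ |a i| := by
        nlinarith [abs_nonneg (a i), hγpow1 i, hγpow i]
      have h2 : (0:ℝ) ≤ (ε / 4) * (((i : ℝ) + 1) * γ ^ i) := by positivity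
      rw [if_pos hiN]
      linarith
    · have hi : N ≤ i := not_lt.mp hiN
      have h1 : γ ^ i * |a i| ≤ γ ^ i * ((ε / 4) * ((i : ℝ) + 1)) :=
        mul_le_mul_of_nonneg_left (hNbound i hi) (hγpow i)
      rw [if_neg hiN]
      nlinarith
  have hcsum : Summable (fun i : ℕ => if i < N then |a i| else (0:ℝ)) := by
    apply summable_of_finite_support
    apply Set.Finite.subset (Set.finite_Iio N)
    intro i hi
    simp only [Function.mem_support] at hi
    by_contra h
    simp only [Set.mem_Iio, not_lt] at h
    exact hi (if_neg (not_lt.mpr h))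
  have hdsum : Summable (fun i : ℕ => (ε / 4) * (((i : ℝ) + 1) * γ ^ i)) := hgeo.mul_left _
  have hcval : ∑' i : ℕ, (if i < N then |a i| else (0:ℝ)) = M := by
    rw [tsum_eq_sum (s := Finset.range N)]
    · exact Finset.sum_congr rfl fun i hi => if_pos (Finset.mem_range.mp hi)
    · intro i hi
      exact if_neg (fun h => hi (Finset.mem_range.mpr h))
  have hdval : ∑' i : ℕ, (ε / 4) * (((i : ℝ) + 1) * γ ^ i) = (ε / 4) * (1 / (1 - γ) ^ 2) := by
    rw [tsum_mul_left, (geom2 hγ0 hγlt).tsum_eq]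
  have hTabs : |∑' i : ℕ, γ ^ i * a i| ≤ M + (ε / 4) * (1 / (1 - γ) ^ 2) := by
    have step1 : |∑' i : ℕ, γ ^ i * a i| ≤ ∑' i : ℕ, |γ ^ i * a i| := by
      have := norm_tsum_le_tsum_norm (f := fun i : ℕ => γ ^ i * a i)
        (by simpa only [Real.norm_eq_abs] using hsumabs)
      simpa only [Real.norm_eq_abs] using this
    have step2 : ∑' i : ℕ, |γ ^ i * a i|
        ≤ ∑' i : ℕ, ((if i < N then |a i| else (0:ℝ)) + (ε / 4) * (((i : ℝ) + 1) * γ ^ i)) :=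
      Summable.tsum_le_tsum hbnd hsumabs (hcsum.add hdsum)
    have step3 : ∑' i : ℕ, ((if i < N then |a i| else (0:ℝ)) + (ε / 4) * (((i : ℝ) + 1) * γ ^ i))
        = M + (ε / 4) * (1 / (1 - γ) ^ 2) := by
      rw [Summable.tsum_add hcsum hdsum, hcval, hdval]
    linarith
  rw [Real.dist_eq, sub_zero, abs_mul, abs_of_nonneg (by positivity : (0:ℝ) ≤ (1-γ)^2)]
  have hne : ((1 : ℝ) - γ) ^ 2 ≠ 0 := by positivity
  have hfin : (1 - γ) ^ 2 * (M + (ε / 4) * (1 / (1 - γ) ^ 2))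
      = (1 - γ) ^ 2 * M + ε / 4 := by
    field_simp
  have hmul : (1 - γ) ^ 2 * |∑' i : ℕ, γ ^ i * a i|
      ≤ (1 - γ) ^ 2 * (M + (ε / 4) * (1 / (1 - γ) ^ 2)) :=
    mul_le_mul_of_nonneg_left hTabs (by positivity)
  rw [hfin] at hmul
  have h2 : (1 - γ) ^ 2 * (2 * (M + 1)) < ε := (lt_div_iff₀ (by positivity)).mp hsq
  nlinarith [mul_nonneg (sq_nonneg (1 - γ)) hM0, sq_nonneg (1 - γ)]

/-- If the Cesàro averages of a `[0,1]`-valued sequence converge to `L`, then the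
normalized discounted sums `(1-γ)·∑ γ^i r i` converge to `L` as `γ → 1⁻`. -/
theorem stmt_0 (r : ℕ → ℝ) (hr : ∀ i, r i ∈ Set.Icc (0:ℝ) 1) (L : ℝ)
    (hC : Filter.Tendsto (fun t : ℕ => (∑ i ∈ Finset.range t, r i) / t)
      Filter.atTop (nhds L)) :
    Filter.Tendsto (fun γ : ℝ => (1 - γ) * ∑' i : ℕ, γ ^ i * r i)
      (nhdsWithin 1 (Set.Iio 1)) (nhds L) := by
  set S : ℕ → ℝ := fun t => ∑ i ∈ Finset.range t, r i with hS
  set a : ℕ → ℝ := fun i => S (i + 1) - ((i : ℝ) + 1) * L with haDef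
  have hSbound : ∀ t : ℕ, |S t| ≤ (t : ℝ) := by
    intro t
    have h0 : 0 ≤ S t := Finset.sum_nonneg fun i _ => (hr i).1
    rw [abs_of_nonneg h0]
    calc S t ≤ ∑ i ∈ Finset.range t, (1 : ℝ) :=
          Finset.sum_le_sum fun i _ => (hr i).2
      _ = t := by simp
  have hb : ∀ i : ℕ, |a i| ≤ (1 + |L|) * ((i : ℝ) + 1) := by
    intro i
    have h1 : |S (i + 1)| ≤ (i : ℝ) + 1 := by
      have := hSbound (i + 1); push_cast at this ⊢; linarith
    calc |a i| ≤ |S (i + 1)| + |((i : ℝ) + 1) * L| := abs_sub _ _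
      _ ≤ ((i : ℝ) + 1) + ((i : ℝ) + 1) * |L| := by
          rw [abs_mul, abs_of_nonneg (by positivity : (0:ℝ) ≤ (i : ℝ) + 1)]
          linarith
      _ = (1 + |L|) * ((i : ℝ) + 1) := by ring
  have ha : Tendsto (fun i : ℕ => a i / ((i : ℝ) + 1)) atTop (nhds 0) := by
    have hshift : Tendsto (fun i : ℕ => S (i + 1) / ((i : ℝ) + 1)) atTop (nhds L) := by
      have h := hC.comp (tendsto_add_atTop_nat 1)
      refine h.congr fun i => ?_
      show (∑ j ∈ Finset.range (i + 1), r j) / ((i + 1 : ℕ) : ℝ) = S (i + 1) / ((i : ℝ) + 1)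
      push_cast
      rfl
    have h2 : Tendsto (fun i : ℕ => S (i + 1) / ((i : ℝ) + 1) - L) atTop (nhds (L - L)) :=
      hshift.sub tendsto_const_nhds
    rw [sub_self] at h2
    refine h2.congr fun i => ?_
    have hip : ((i : ℝ) + 1) ≠ 0 := by positivity
    simp only [haDef]
    field_simp
  have hkey := key a (1 + |L|) hb ha
  have hEq : ∀ γ : ℝ, 0 < γ → γ < 1 →
      (1 - γ) * ∑' i : ℕ, γ ^ i * r i = L + (1 - γ) ^ 2 * ∑' i : ℕ, γ ^ i * a i := by
    intro γ h0 h1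
    have h1γ : (0:ℝ) < 1 - γ := by linarith
    have hgeo : Summable (fun i : ℕ => ((i : ℝ) + 1) * γ ^ i) := (geom2 h0 h1).summable
    have hγpow : ∀ i : ℕ, (0 : ℝ) ≤ γ ^ i := fun i => pow_nonneg h0.le i
    have hsum1 : Summable (fun i : ℕ => γ ^ i * S (i + 1)) := by
      apply Summable.of_norm_bounded hgeo
      intro i
      rw [Real.norm_eq_abs, abs_mul, abs_of_nonneg (hγpow i)]
      have h := hSbound (i + 1)
      push_cast at h
      nlinarith [abs_nonneg (S (i+1)), hγpow i]
    have hsum0 : Summable (fun i : ℕ => γ ^ i * S i) := by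
      apply Summable.of_norm_bounded hgeo
      intro i
      rw [Real.norm_eq_abs, abs_mul, abs_of_nonneg (hγpow i)]
      have h := hSbound i
      nlinarith [abs_nonneg (S i), hγpow i]
    have hshift : ∑' i : ℕ, γ ^ i * S i = γ * ∑' i : ℕ, γ ^ i * S (i + 1) := by
      have hS0 : S 0 = 0 := by simp [hS]
      rw [Summable.tsum_eq_zero_add hsum0, hS0, pow_zero, one_mul, zero_add, ← tsum_mul_left]
      exact tsum_congr fun i => by rw [pow_succ]; ring
    have hrS : ∀ i : ℕ, γ ^ i * r i = γ ^ i * S (i + 1) - γ ^ i * S i := by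
      intro i
      have hx : S (i + 1) = S i + r i := Finset.sum_range_succ r i
      rw [hx]; ring
    have hmain : ∑' i : ℕ, γ ^ i * r i = (1 - γ) * ∑' i : ℕ, γ ^ i * S (i + 1) := by
      calc ∑' i : ℕ, γ ^ i * r i
          = ∑' i : ℕ, (γ ^ i * S (i + 1) - γ ^ i * S i) := tsum_congr hrS
        _ = ∑' i : ℕ, γ ^ i * S (i + 1) - ∑' i : ℕ, γ ^ i * S i :=
            Summable.tsum_sub hsum1 hsum0
        _ = (1 - γ) * ∑' i : ℕ, γ ^ i * S (i + 1) := by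
            rw [hshift]; ring
    have hLsum : HasSum (fun i : ℕ => γ ^ i * (((i : ℝ) + 1) * L)) (L * (1 / (1 - γ) ^ 2)) := by
      have h := (geom2 h0 h1).mul_left L
      refine HasSum.congr_fun h fun i => ?_
      ring
    have hasum : ∑' i : ℕ, γ ^ i * a i
        = ∑' i : ℕ, γ ^ i * S (i + 1) - L * (1 / (1 - γ) ^ 2) := by
      calc ∑' i : ℕ, γ ^ i * a i
          = ∑' i : ℕ, (γ ^ i * S (i + 1) - γ ^ i * (((i : ℝ) + 1) * L)) := by
            refine tsum_congr fun i => ?_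
            simp only [haDef]
            ring
        _ = ∑' i : ℕ, γ ^ i * S (i + 1) - ∑' i : ℕ, γ ^ i * (((i : ℝ) + 1) * L) :=
            Summable.tsum_sub hsum1 hLsum.summable
        _ = ∑' i : ℕ, γ ^ i * S (i + 1) - L * (1 / (1 - γ) ^ 2) := by
            rw [hLsum.tsum_eq]
    rw [hmain, hasum]
    have hne : ((1:ℝ) - γ) ≠ 0 := by linarith
    field_simp
    ring
  have hmem : Set.Ioo (0:ℝ) 1 ∈ nhdsWithin (1:ℝ) (Set.Iio 1) :=
    Ioo_mem_nhdsLT_of_mem (by constructor <;> norm_num)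
  have hfin : Tendsto (fun γ : ℝ => L + (1 - γ) ^ 2 * ∑' i : ℕ, γ ^ i * a i)
      (nhdsWithin 1 (Set.Iio 1)) (nhds L) := by
    have h := hkey.const_add L
    simpa using h
  apply hfin.congr'
  filter_upwards [hmem] with γ hγ
  exact (hEq γ hγ.1 hγ.2).symm
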